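/- The set of rationals greater than 1 that are not abundancy indices (i.e., not of the form σ(n)/n for any positive integer n) is dense in the rationals greater than 1. -/

import Mathlib

lemma sigma_div_eq_sum_inv (N : ℕ) (h : 0 < N) :
    (ArithmeticFunction.sigma 1 N : ℚ) / N = ∑ d ∈ N.divisors, ((d : ℚ))⁻¹ := by
  have h0 : (N : ℚ) ≠ 0 := by exact_mod_cast h.ne'
  rw [ArithmeticFunction.sigma_one_apply, div_eq_iff h0]
  push_cast
  rw [Finset.sum_mul, ← Nat.sum_div_divisors N (fun d => (d : ℚ))]
  refine Finset.sum_congr rfl fun d hd => ?_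
  have hd0 : (d : ℚ) ≠ 0 := by exact_mod_cast (Nat.pos_of_mem_divisors hd).ne'
  rw [Nat.cast_div (Nat.dvd_of_mem_divisors hd) hd0]
  field_simp

lemma abundancy_mono {d n : ℕ} (hd : 0 < d) (hn : 0 < n) (hdvd : d ∣ n) :
    (ArithmeticFunction.sigma 1 d : ℚ) / d ≤ (ArithmeticFunction.sigma 1 n : ℚ) / n := by
  rw [sigma_div_eq_sum_inv d hd, sigma_div_eq_sum_inv n hn]
  refine Finset.sum_le_sum_of_subset_of_nonneg (Nat.divisors_subset_of_dvd hn.ne' hdvd) ?_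
  intro i _ _
  positivity

lemma harmonic_le_abundancy (k : ℕ) :
    harmonic k ≤ (ArithmeticFunction.sigma 1 (k.factorial) : ℚ) / (k.factorial) := by
  rw [sigma_div_eq_sum_inv _ k.factorial_pos, harmonic_eq_sum_Icc]
  refine Finset.sum_le_sum_of_subset_of_nonneg ?_ (by intros; positivity)
  intro i hi
  simp only [Finset.mem_Icc] at hi
  exact Nat.mem_divisors.mpr ⟨Nat.dvd_factorial hi.1 hi.2, k.factorial_pos.ne'⟩

lemma exists_harmonic_gt (b : ℚ) : ∃ k : ℕ, 0 < k ∧ b < harmonic k := by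
  obtain ⟨n, hn⟩ := exists_nat_ge (Real.exp b)
  refine ⟨n + 1, n.succ_pos, ?_⟩
  have hlt : (n : ℝ) < (n : ℝ) + 1 := by linarith
  have h1 : (b : ℝ) < Real.log (n + 1) := by
    rw [← Real.log_exp (b : ℝ)]
    exact Real.log_lt_log (Real.exp_pos _) (lt_of_le_of_lt hn hlt)
  have h2 := log_add_one_le_harmonic n
  have h3 : (harmonic n : ℝ) ≤ ((harmonic (n + 1) : ℚ) : ℝ) := by
    have : harmonic n ≤ harmonic (n + 1) := by
      rw [harmonic_succ]; exact le_add_of_nonneg_right (by positivity)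
    exact_mod_cast this
  push_cast at h2
  have : (b : ℝ) < ((harmonic (n + 1) : ℚ) : ℝ) := by linarith
  exact_mod_cast this

theorem non_abundancy_dense (a b : ℚ) (ha : 1 < a) (hab : a < b) :
    ∃ q : ℚ, a < q ∧ q < b ∧ ¬ ∃ n : ℕ, 0 < n ∧ (ArithmeticFunction.sigma 1 n : ℚ) / n = q := by
  have ha0 : (0:ℚ) < a := by linarith
  have hb0 : (0:ℚ) < b := by linarith
  have hba : (0:ℚ) < b - a := by linarith
  -- M with abundancy > b
  obtain ⟨k, hk, hbk⟩ := exists_harmonic_gt b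
  set M : ℕ := k.factorial with hMdef
  have hM0 : 0 < M := k.factorial_pos
  have hMQ : (0:ℚ) < (M:ℚ) := by exact_mod_cast hM0
  have hbM : b < (ArithmeticFunction.sigma 1 M : ℚ) / M :=
    lt_of_lt_of_le hbk (harmonic_le_abundancy k)
  -- choose a big prime p
  obtain ⟨n₀, hn₀⟩ := exists_nat_gt ((M:ℚ) * a * b / (b - a))
  obtain ⟨p, hpn, hp⟩ := Nat.exists_infinite_primes n₀
  have hpQ : (0:ℚ) < (p:ℚ) := by exact_mod_cast hp.pos
  have hpbig : (M:ℚ) * a * b / (b - a) < p := by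
    calc (M:ℚ) * a * b / (b - a) < n₀ := hn₀
    _ ≤ p := by exact_mod_cast hpn
  have hpbig' : (M:ℚ) * a * b < p * (b - a) := by
    rwa [div_lt_iff₀ hba] at hpbig
  -- choose t
  set x : ℚ := (p:ℚ) / (b * M) with hxdef
  set t : ℕ := ⌊x⌋₊ + 1 with htdef
  have ht0 : 0 < t := Nat.succ_pos _
  have htx : x < (t:ℚ) := by
    rw [htdef]
    push_cast
    exact Nat.lt_floor_add_one x
  have htx' : (t:ℚ) ≤ x + 1 := by
    rw [htdef]
    push_cast
    have := Nat.floor_le (show (0:ℚ) ≤ x by positivity)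
    linarith
  set D : ℕ := t * M with hDdef
  have hD0 : 0 < D := Nat.mul_pos ht0 hM0
  have hDQ : (0:ℚ) < (D:ℚ) := by exact_mod_cast hD0
  have hDcast : (D:ℚ) = (t:ℚ) * M := Nat.cast_mul t M
  -- p < b * D
  have hD1 : (p:ℚ) < b * D := by
    rw [hDcast]
    have h := (div_lt_iff₀ (by positivity : (0:ℚ) < b * M)).mp htx
    nlinarith
  -- a * D < p
  have hD2 : a * D < (p:ℚ) := by
    rw [hDcast]
    have h : (t:ℚ) * (b * M) ≤ (p:ℚ) + b * M := by
      have := mul_le_mul_of_nonneg_right htx' (le_of_lt (by positivity : (0:ℚ) < b * M))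
      rw [hxdef] at this
      have hne : (b * (M:ℚ)) ≠ 0 := by positivity
      calc (t:ℚ) * (b * M) ≤ ((p:ℚ) / (b * M) + 1) * (b * M) := this
        _ = (p:ℚ) + b * M := by field_simp
    nlinarith
  refine ⟨(p:ℚ) / D, ?_, ?_, ?_⟩
  · rwa [lt_div_iff₀ hDQ]
  · rw [div_lt_iff₀ hDQ]; linarith
  rintro ⟨n, hn, heq⟩
  have hnQ : (0:ℚ) < (n:ℚ) := by exact_mod_cast hn
  -- cross-multiplied equation in ℕ
  have hcross : ArithmeticFunction.sigma 1 n * D = p * n := by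
    have := (div_eq_div_iff (by positivity : (n:ℚ) ≠ 0) (by positivity : (D:ℚ) ≠ 0)).mp heq
    exact_mod_cast this
  -- D < p, so p does not divide D, coprime
  have hDp : D < p := by
    have : (D:ℚ) < a * D := by nlinarith
    have : (D:ℚ) < (p:ℚ) := by linarith
    exact_mod_cast this
  have hcop : Nat.Coprime p D := (Nat.Prime.coprime_iff_not_dvd hp).mpr
    (fun h => absurd (Nat.le_of_dvd hD0 h) (not_le.mpr hDp))
  -- D ∣ n
  have hDn : D ∣ n := by
    have h1 : D ∣ p * n := hcross ▸ dvd_mul_left D _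
    exact (Nat.Coprime.dvd_of_dvd_mul_left hcop.symm h1)
  -- abundancy bounds
  have hmono1 : (ArithmeticFunction.sigma 1 D : ℚ) / D ≤ (ArithmeticFunction.sigma 1 n : ℚ) / n :=
    abundancy_mono hD0 hn hDn
  have hmono2 : (ArithmeticFunction.sigma 1 M : ℚ) / M ≤ (ArithmeticFunction.sigma 1 D : ℚ) / D :=
    abundancy_mono hM0 hD0 (dvd_mul_left M t)
  rw [heq] at hmono1
  -- σ(D) ≤ p
  have h5 : (ArithmeticFunction.sigma 1 D : ℚ) ≤ p := by
    have h := mul_le_mul_of_nonneg_right hmono1 hDQ.le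
    rwa [div_mul_cancel₀ _ hDQ.ne', div_mul_cancel₀ _ hDQ.ne'] at h
  -- σ(D) > b * D > p
  have h6 : b < (ArithmeticFunction.sigma 1 D : ℚ) / D := lt_of_lt_of_le hbM hmono2
  have h7 : b * D < (ArithmeticFunction.sigma 1 D : ℚ) := by
    rw [lt_div_iff₀ hDQ] at h6; linarith
  linarith
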